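/- Let p₁ be the quadratic polynomial satisfying (1/Δx)∫_{I_{i-1}} p₁ dx = ū_{i-1}, (1/Δx)∫_{I_i} p₁ dx = ū_i, and (1/Δx)∫_{I_i} p₁(x)(x−x_i)/Δx dx = v̄_i on a uniform mesh of size Δx. Then its Jiang–Shu smoothness indicator on I_i equals 144 v̄_i² + (13/3)(ū_{i-1} − ū_i + 12 v̄_i)². -/

import Mathlib

open intervalIntegral

set_option maxHeartbeats 1000000

lemma cubint (A B C D l u : ℝ) :
    (∫ x in l..u, (A + B*x + C*x^2 + D*x^3)) =
      (A*u + B/2*u^2 + C/3*u^3 + D/4*u^4) - (A*l + B/2*l^2 + C/3*l^3 + D/4*l^4) := by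
  have hderiv : ∀ x ∈ Set.uIcc l u,
      HasDerivAt (fun x : ℝ => A*x + B/2*x^2 + C/3*x^3 + D/4*x^4)
        (A + B*x + C*x^2 + D*x^3) x := by
    intro x _
    have h := (((hasDerivAt_id x).const_mul A).add
      (((hasDerivAt_pow 2 x).const_mul (B/2)).add
        (((hasDerivAt_pow 3 x).const_mul (C/3)).add
          ((hasDerivAt_pow 4 x).const_mul (D/4)))))
    refine (h.congr_deriv ?_).congr_of_eventuallyEq (Filter.Eventually.of_forall ?_)
    · simp; ring
    · intro x; simp; ring
  have hint : IntervalIntegrable (fun x : ℝ => A + B*x + C*x^2 + D*x^3)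
      MeasureTheory.volume l u := (by continuity : Continuous _).intervalIntegrable _ _
  simpa using intervalIntegral.integral_eq_sub_of_hasDerivAt hderiv hint

theorem stmt_12 (Δx xi ubarm1 ubar0 vbar0 : ℝ) (hΔx : 0 < Δx)
    (a b c : ℝ) (p : ℝ → ℝ)
    (hp : ∀ x, p x = a + b * x + c * x^2)
    (havgm1 : (1/Δx) * ∫ x in (xi - 3/2 * Δx)..(xi - 1/2 * Δx), p x = ubarm1)
    (havg0 : (1/Δx) * ∫ x in (xi - 1/2 * Δx)..(xi + 1/2 * Δx), p x = ubar0)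
    (hmom0 : (1/Δx) * ∫ x in (xi - 1/2 * Δx)..(xi + 1/2 * Δx),
        p x * ((x - xi)/Δx) = vbar0) :
    ((∫ x in (xi - 1/2 * Δx)..(xi + 1/2 * Δx), Δx * (b + 2*c*x)^2)
      + ∫ x in (xi - 1/2 * Δx)..(xi + 1/2 * Δx), Δx^3 * (2*c)^2)
      = 144 * vbar0^2 + (13/3) * (ubarm1 - ubar0 + 12 * vbar0)^2 := by
  have hne : Δx ≠ 0 := hΔx.ne'
  have H1 : (∫ x in (xi - 3/2 * Δx)..(xi - 1/2 * Δx), p x)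
      = ∫ x in (xi - 3/2 * Δx)..(xi - 1/2 * Δx), (a + b*x + c*x^2 + 0*x^3) :=
    intervalIntegral.integral_congr (fun x _ => by rw [hp]; ring)
  have H2 : (∫ x in (xi - 1/2 * Δx)..(xi + 1/2 * Δx), p x)
      = ∫ x in (xi - 1/2 * Δx)..(xi + 1/2 * Δx), (a + b*x + c*x^2 + 0*x^3) :=
    intervalIntegral.integral_congr (fun x _ => by rw [hp]; ring)
  have H3 : (∫ x in (xi - 1/2 * Δx)..(xi + 1/2 * Δx), p x * ((x - xi)/Δx))
      = ∫ x in (xi - 1/2 * Δx)..(xi + 1/2 * Δx),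
        ((-a*xi/Δx) + ((a - b*xi)/Δx)*x + ((b - c*xi)/Δx)*x^2 + (c/Δx)*x^3) :=
    intervalIntegral.integral_congr (fun x _ => by rw [hp]; field_simp; ring)
  have H4 : (∫ x in (xi - 1/2 * Δx)..(xi + 1/2 * Δx), Δx * (b + 2*c*x)^2)
      = ∫ x in (xi - 1/2 * Δx)..(xi + 1/2 * Δx),
        ((Δx*b^2) + (4*Δx*b*c)*x + (4*Δx*c^2)*x^2 + 0*x^3) :=
    intervalIntegral.integral_congr (fun x _ => by ring)
  have H5 : (∫ x in (xi - 1/2 * Δx)..(xi + 1/2 * Δx), Δx^3 * (2*c)^2)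
      = ∫ x in (xi - 1/2 * Δx)..(xi + 1/2 * Δx),
        ((Δx^3*(2*c)^2) + 0*x + 0*x^2 + 0*x^3) :=
    intervalIntegral.integral_congr (fun x _ => by ring)
  rw [H1, cubint] at havgm1
  rw [H2, cubint] at havg0
  rw [H3, cubint] at hmom0
  rw [H4, cubint, H5, cubint]
  subst havgm1 havg0 hmom0
  field_simp
  ring
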